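/- (Minkowski) The kernel of the reduction homomorphism GL_n(ℤ) → GL_n(ℤ/3ℤ) is torsion-free: if A ∈ GL_n(ℤ) satisfies A ≡ I modulo 3 and A^k = I for some k ≥ 1, then A = I. -/

import Mathlib

open Finset in
lemma pow_entry_dvd (n : ℕ) (B : Matrix (Fin n) (Fin n) ℤ) (m : ℕ)
    (hdvd : ∀ i j, (3:ℤ)^m ∣ B i j) :
    ∀ (t : ℕ) (i j : Fin n), (3:ℤ)^(m*t) ∣ (B^t) i j := by
  intro t
  induction t with
  | zero => intro i j; simpa using dvd_refl _
  | succ t ih =>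
      intro i j
      rw [pow_succ, Matrix.mul_apply]
      refine Finset.dvd_sum fun k _ => ?_
      rw [show m * (t+1) = m*t + m by ring, pow_add]
      exact mul_dvd_mul (ih i k) (hdvd k j)

open Finset in
lemma key_step (n : ℕ) (p : ℕ) (hp : p.Prime) (B : Matrix (Fin n) (Fin n) ℤ)
    (hB : (B + 1)^p = 1) (m : ℕ) (hm : 1 ≤ m)
    (hdvd : ∀ i j, (3:ℤ)^m ∣ B i j) :
    ∀ i j, (3:ℤ)^(m+1) ∣ B i j := by
  obtain ⟨q, hq⟩ : ∃ q, p = q + 2 := ⟨p - 2, by have := hp.two_le; omega⟩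
  have h1 : (B + 1)^p = ∑ i ∈ range (p+1), (p.choose i) • B^i := by
    rw [Commute.add_pow (Commute.one_right B)]
    refine Finset.sum_congr rfl fun i _ => ?_
    rw [nsmul_eq_mul, one_pow, mul_one, (Nat.cast_commute (p.choose i) (B^i)).eq]
  rw [hB, hq] at h1
  rw [show q + 2 + 1 = (q+1) + 1 + 1 from rfl, Finset.sum_range_succ',
    Finset.sum_range_succ'] at h1
  simp only [pow_zero, pow_one, Nat.choose_zero_right, zero_add, Nat.choose_one_right,
    one_smul] at h1
  replace h1 := h1.symm
  rw [add_eq_right] at h1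
  have h2 : (q+2) • B = -∑ i ∈ range (q+1), ((q+2).choose (i+1+1)) • B^(i+1+1) :=
    eq_neg_of_add_eq_zero_right h1
  intro a b
  have h3 := congrFun (congrFun h2 a) b
  simp only [Matrix.smul_apply, Matrix.neg_apply, Matrix.sum_apply] at h3
  simp only [nsmul_eq_mul] at h3
  -- h3 : ↑(q+2) * B a b = -∑ i in range (q+1), ↑((q+2).choose (i+1+1)) * (B^(i+1+1)) a b
  by_cases hp3 : p = 3
  · -- p = 3, q = 1
    have hq1 : q = 1 := by omega
    subst hq1
    rw [Finset.sum_range_succ, Finset.sum_range_one] at h3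
    norm_num at h3
    -- h3 : 3 * B a b = -((3:ℤ) * (B^2) a b + (B^3) a b)  (roughly)
    have hd2 : (3:ℤ)^(m+2) ∣ 3 * (B^2) a b := by
      calc (3:ℤ)^(m+2) = 3 * 3^(m+1) := by ring
      _ ∣ 3 * (B^2) a b := mul_dvd_mul_left 3 (dvd_trans (pow_dvd_pow 3 (by omega : m+1 ≤ m*2))
          (pow_entry_dvd n B m hdvd 2 a b))
    have hd3 : (3:ℤ)^(m+2) ∣ (B^3) a b :=
      dvd_trans (pow_dvd_pow 3 (by omega : m+2 ≤ m*3)) (pow_entry_dvd n B m hdvd 3 a b)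
    have hd : (3:ℤ)^(m+2) ∣ (3:ℤ) * B a b := by
      rw [h3, ← neg_add]
      exact dvd_neg.mpr (dvd_add hd3 hd2)
    rw [show (3:ℤ)^(m+2) = 3 * 3^(m+1) by ring] at hd
    exact (mul_dvd_mul_iff_left (by norm_num : (3:ℤ) ≠ 0)).mp hd
  · -- p ≠ 3
    have hS : (3:ℤ)^(m+1) ∣ ((q+2 : ℕ) : ℤ) * B a b := by
      rw [h3, dvd_neg]
      refine Finset.dvd_sum fun i _ => ?_
      refine Dvd.dvd.mul_left ?_ _
      exact dvd_trans (pow_dvd_pow 3 (by nlinarith : m+1 ≤ m*(i+1+1)))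
        (pow_entry_dvd n B m hdvd (i+1+1) a b)
    have hcop : IsCoprime ((3:ℤ)^(m+1)) (((q+2:ℕ)) : ℤ) := by
      refine IsCoprime.pow_left ?_
      have hc : Nat.Coprime 3 (q+2) := by
        rw [← hq]
        exact (Nat.coprime_primes Nat.prime_three hp).mpr (by omega)
      rw [Int.isCoprime_iff_gcd_eq_one]
      exact (Int.gcd_natCast_natCast 3 (q+2)).trans hc
    exact hcop.dvd_of_dvd_mul_left hS

lemma entry_zero_of_all_pow_dvd (x : ℤ) (h : ∀ m : ℕ, (3:ℤ)^m ∣ x) : x = 0 := by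
  by_contra hx
  have h1 : (3:ℤ)^(x.natAbs) ≤ |x| :=
    Int.le_of_dvd (abs_pos.mpr hx) ((dvd_abs _ _).mpr (h x.natAbs))
  have h2 : (x.natAbs : ℤ) < (3:ℤ)^(x.natAbs) := by
    have : x.natAbs < 3 ^ x.natAbs := Nat.lt_pow_self (by norm_num : 1 < 3)
    exact_mod_cast this
  rw [Int.abs_eq_natAbs] at h1
  omega

lemma prime_case (n : ℕ) (A : Matrix.GeneralLinearGroup (Fin n) ℤ)
    (hA : Matrix.GeneralLinearGroup.map (Int.castRingHom (ZMod 3)) A = 1)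
    (p : ℕ) (hp : p.Prime) (hAp : A ^ p = 1) : A = 1 := by
  set B : Matrix (Fin n) (Fin n) ℤ := (A : Matrix (Fin n) (Fin n) ℤ) - 1 with hBdef
  have hB : (B + 1)^p = 1 := by
    rw [hBdef, sub_add_cancel]
    have := congrArg (Units.val) hAp
    simpa using this
  have hbase : ∀ i j, (3:ℤ)^1 ∣ B i j := by
    intro i j
    have h0 : ((A : Matrix (Fin n) (Fin n) ℤ)).map (Int.cast : ℤ → ZMod 3) = 1 := by
      have := congrArg (Units.val) hA
      simpa [Matrix.GeneralLinearGroup.map] using this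
    have h1 : ((B i j : ℤ) : ZMod 3) = 0 := by
      have hmap : B.map (Int.cast : ℤ → ZMod 3) = 0 := by
        rw [hBdef, Matrix.map_sub, h0]
        · simp [Matrix.map_one (Int.cast : ℤ → ZMod 3) Int.cast_zero Int.cast_one]
        · exact fun a b => Int.cast_sub a b
      have := congrFun (congrFun hmap i) j
      simpa [Matrix.map_apply] using this
    simpa using (ZMod.intCast_zmod_eq_zero_iff_dvd (B i j) 3).mp h1
  have hall : ∀ m : ℕ, 1 ≤ m → ∀ i j, (3:ℤ)^m ∣ B i j := by
    intro m
    induction m with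
    | zero => omega
    | succ t ih =>
        intro _ i j
        by_cases ht : t = 0
        · subst ht; exact hbase i j
        · have ht1 : 1 ≤ t := by omega
          exact key_step n p hp B hB t ht1 (ih ht1) i j
  have hB0 : B = 0 := by
    ext i j
    exact entry_zero_of_all_pow_dvd (B i j) fun m => by
      rcases Nat.eq_zero_or_pos m with rfl | hm
      · simp
      · exact hall m hm i j
  ext
  have : (A : Matrix (Fin n) (Fin n) ℤ) = 1 := by
    have := hB0
    rw [hBdef, sub_eq_zero] at this
    exact this
  simp [this]

/-- **Minkowski.** The kernel of the reduction homomorphism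
`GL_n(ℤ) → GL_n(ℤ/3)` is torsion-free: a matrix `A ∈ GL_n(ℤ)` congruent to the
identity modulo `3` with `A ^ k = 1` for some `k ≥ 1` equals the identity. -/
theorem minkowski_kernel_torsionFree (n : ℕ)
    (A : Matrix.GeneralLinearGroup (Fin n) ℤ)
    (hA : Matrix.GeneralLinearGroup.map (Int.castRingHom (ZMod 3)) A = 1)
    (k : ℕ) (hk : 1 ≤ k) (hAk : A ^ k = 1) : A = 1 := by
  induction k using Nat.strong_induction_on with
  | _ k ih =>
    by_cases hk1 : k = 1
    · subst hk1; simpa using hAk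
    · have hk2 : 2 ≤ k := by omega
      set p := k.minFac with hp
      have hpp : p.Prime := Nat.minFac_prime (by omega)
      have hpd : p ∣ k := Nat.minFac_dvd k
      have hC : (A ^ (k / p)) ^ p = 1 := by
        rw [← pow_mul, Nat.div_mul_cancel hpd, hAk]
      have hCmap : Matrix.GeneralLinearGroup.map (Int.castRingHom (ZMod 3)) (A ^ (k / p)) = 1 := by
        rw [map_pow, hA, one_pow]
      have hC1 : A ^ (k / p) = 1 := prime_case n (A ^ (k / p)) hCmap p hpp hC
      have hlt : k / p < k := Nat.div_lt_self (by omega) hpp.two_le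
      have hge : 1 ≤ k / p := Nat.one_le_div_iff (hpp.pos) |>.mpr (Nat.le_of_dvd (by omega) hpd)
      exact ih (k / p) hlt hge hC1
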